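/- For the inverted catenoid: given λ, b ∈ ℝ with λ ≠ 0, set c = -λ/4 and a = (λ/4)log(|λ|/8) + 3λ/8 - b/2. The outermost graphical piece Σ_{c,a} of the image of the catenoid {(|c|cosh t cos θ, |c|cosh t sin θ, ct)} under the inversion I_a(x,y,z) = (x,y,z-a)/|(x,y,z-a)|² is the graph of a function U(r) satisfying U(r) = -c r² log r + (c log 2 - c log|c| - a) r² + o(r²) as r → 0⁺; in particular lim_{r→0⁺}(U''(r) - (λ/2)log r) = b. -/

import Mathlib

open Real Set Filter Topology
namespace Stmt19
variable {c a : ℝ}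



noncomputable def DD (c a t : ℝ) : ℝ := c ^ 2 * (Real.cosh t) ^ 2 + (c * t - a) ^ 2
noncomputable def hh (c a t : ℝ) : ℝ := |c| * Real.cosh t / DD c a t
noncomputable def VV (c a t : ℝ) : ℝ := (c * t - a) / DD c a t
noncomputable def NN (c a t : ℝ) : ℝ :=
  Real.sinh t * (c * t - a) ^ 2 - c ^ 2 * Real.cosh t ^ 2 * Real.sinh t
    - 2 * c * Real.cosh t * (c * t - a)
noncomputable def NV (c a t : ℝ) : ℝ :=
  c ^ 3 * Real.cosh t ^ 2 - c * (c * t - a) ^ 2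
    - 2 * c ^ 2 * Real.cosh t * Real.sinh t * (c * t - a)
noncomputable def GG (c a t : ℝ) : ℝ :=
  3 * c ^ 2 * Real.cosh t ^ 2 - 2 * c * Real.cosh t * Real.sinh t * (c * t - a)
    + (c * t - a) ^ 2
noncomputable def WW (c a t : ℝ) : ℝ := NV c a t / (|c| * NN c a t)
noncomputable def QQ (c a t : ℝ) : ℝ :=
  Real.cosh t * DD c a t ^ 3 * GG c a t / (c * NN c a t ^ 3)


lemma DD_pos (hc : c ≠ 0) (t : ℝ) : 0 < DD c a t := by
  have h1 : 0 < c ^ 2 * (Real.cosh t) ^ 2 := by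
    have := Real.cosh_pos (x := t); positivity
  have h2 : 0 ≤ (c * t - a) ^ 2 := sq_nonneg _
  unfold DD; linarith

lemma hh_pos (hc : c ≠ 0) (t : ℝ) : 0 < hh c a t :=
  div_pos (mul_pos (abs_pos.mpr hc) (Real.cosh_pos (x := t))) (DD_pos hc t)

lemma hasDerivAt_P (t : ℝ) : HasDerivAt (fun t => c * t - a) c t := by
  simpa using ((hasDerivAt_id t).const_mul c).sub_const a

lemma hasDerivAt_DD (t : ℝ) :
    HasDerivAt (DD c a) (2 * c ^ 2 * Real.cosh t * Real.sinh t + 2 * c * (c * t - a)) t := by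
  exact ((((Real.hasDerivAt_cosh t).pow 2).const_mul (c ^ 2)).add
    ((hasDerivAt_P (c := c) (a := a) t).pow 2)).congr_deriv (by push_cast; ring)

lemma hasDerivAt_hh (hc : c ≠ 0) (t : ℝ) :
    HasDerivAt (hh c a) (|c| * NN c a t / DD c a t ^ 2) t := by
  exact (((Real.hasDerivAt_cosh t).const_mul |c|).div
    (hasDerivAt_DD (c := c) (a := a) t) (DD_pos hc t).ne').congr_deriv
    (by unfold NN DD; ring)

lemma hasDerivAt_VV (hc : c ≠ 0) (t : ℝ) :
    HasDerivAt (VV c a) (NV c a t / DD c a t ^ 2) t := by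
  exact ((hasDerivAt_P (c := c) (a := a) t).div
    (hasDerivAt_DD (c := c) (a := a) t) (DD_pos hc t).ne').congr_deriv
    (by unfold NV DD; ring)

lemma hasDerivAt_NN (t : ℝ) :
    HasDerivAt (NN c a) (Real.cosh t * ((c * t - a) ^ 2 - 3 * c ^ 2 * Real.cosh t ^ 2)) t := by
  exact (((Real.hasDerivAt_sinh t).mul ((hasDerivAt_P (c := c) (a := a) t).pow 2)).sub
      ((((Real.hasDerivAt_cosh t).pow 2).const_mul (c ^ 2)).mul (Real.hasDerivAt_sinh t))
    |>.sub (((Real.hasDerivAt_cosh t).const_mul (2 * c)).mul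
      (hasDerivAt_P (c := c) (a := a) t))).congr_deriv (by
    simp only [Pi.pow_apply, Pi.mul_apply]
    push_cast
    linear_combination (2 * c ^ 2 * Real.cosh t) * Real.cosh_sq_sub_sinh_sq t)

lemma hasDerivAt_NV (t : ℝ) :
    HasDerivAt (NV c a) (-4 * c ^ 2 * (c * t - a) * Real.cosh t ^ 2) t := by
  exact ((((Real.hasDerivAt_cosh t).pow 2).const_mul (c ^ 3)).sub
      (((hasDerivAt_P (c := c) (a := a) t).pow 2).const_mul c)
    |>.sub ((((Real.hasDerivAt_cosh t).const_mul (2 * c ^ 2)).mul (Real.hasDerivAt_sinh t)).mul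
      (hasDerivAt_P (c := c) (a := a) t))).congr_deriv (by
    simp only [Pi.pow_apply, Pi.mul_apply]
    push_cast
    linear_combination (2 * c ^ 2 * (c * t - a)) * Real.cosh_sq_sub_sinh_sq t)

lemma hasDerivAt_WW (hc : c ≠ 0) {t : ℝ} (hN : NN c a t ≠ 0) :
    HasDerivAt (WW c a)
      (c * Real.cosh t * DD c a t * GG c a t / (|c| * NN c a t ^ 2)) t := by
  have hK : |c| ≠ 0 := abs_ne_zero.mpr hc
  have hden : |c| * NN c a t ≠ 0 := mul_ne_zero hK hN
  have H := (hasDerivAt_NV (c := c) (a := a) t).div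
    ((hasDerivAt_NN (c := c) (a := a) t).const_mul |c|) hden
  refine H.congr_deriv ?_
  have e1 : (-4 * c ^ 2 * (c * t - a) * Real.cosh t ^ 2) * (|c| * NN c a t)
      - NV c a t * (|c| * (Real.cosh t * ((c * t - a) ^ 2 - 3 * c ^ 2 * Real.cosh t ^ 2)))
      = |c| * (c * Real.cosh t * DD c a t * GG c a t) := by
    unfold NN NV DD GG; ring
  have e2 : (|c| * NN c a t) ^ 2 = |c| * (|c| * NN c a t ^ 2) := by ring
  rw [e1, e2, mul_div_mul_left _ _ (abs_ne_zero.mpr hc)]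


lemma cosh_ge_exp (t : ℝ) : Real.exp t / 2 ≤ Real.cosh t := by
  rw [Real.cosh_eq]; have := (Real.exp_pos (-t)).le; linarith

lemma sinh_ge_exp {t : ℝ} (ht : 1 ≤ t) : Real.exp t / 4 ≤ Real.sinh t := by
  rw [Real.sinh_eq]
  have h1 : Real.exp (-t) ≤ 1 := by
    rw [show (1:ℝ) = Real.exp 0 from (Real.exp_zero).symm]
    exact Real.exp_le_exp.mpr (by linarith)
  have h2 : (2:ℝ) ≤ Real.exp t := by
    have := Real.exp_one_gt_d9
    have := Real.exp_le_exp.mpr ht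
    linarith
  linarith

lemma sinh_ge_one {t : ℝ} (ht : 1 ≤ t) : 1 ≤ Real.sinh t := by
  have h1 : Real.sinh 1 ≤ Real.sinh t := Real.sinh_le_sinh.mpr ht
  have h2 : (1:ℝ) ≤ Real.sinh 1 := by
    rw [Real.sinh_eq]
    have he : Real.exp 1 > 2.7182818283 := Real.exp_one_gt_d9
    have hprod : Real.exp (-1) * Real.exp 1 = 1 := by
      rw [← Real.exp_add]; norm_num
    nlinarith [Real.exp_pos (-1)]
  linarith

lemma lemA (k m n : ℕ) (h : 1 ≤ m + n) :
    Tendsto (fun t => (c * t - a) ^ k / (Real.cosh t ^ m * Real.sinh t ^ n))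
      atTop (𝓝 0) := by
  have hb : Tendsto (fun t : ℝ => 4 * (|c| + |a|) ^ k * (t ^ k * Real.exp (-t)))
      atTop (𝓝 0) := by
    simpa using (tendsto_pow_mul_exp_neg_atTop_nhds_zero k).const_mul (4 * (|c| + |a|) ^ k)
  apply squeeze_zero_norm' ?_ hb
  filter_upwards [eventually_ge_atTop (1:ℝ)] with t ht
  have hXpos : (0:ℝ) < Real.cosh t := Real.cosh_pos (x := t)
  have hSpos : (0:ℝ) < Real.sinh t := Real.sinh_pos_iff.2 (by linarith : (0:ℝ) < t)
  have hX1 : (1:ℝ) ≤ Real.cosh t := Real.one_le_cosh t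
  have hS1 : (1:ℝ) ≤ Real.sinh t := sinh_ge_one ht
  have hdenpos : (0:ℝ) < Real.cosh t ^ m * Real.sinh t ^ n := by positivity
  have hden : Real.exp t / 4 ≤ Real.cosh t ^ m * Real.sinh t ^ n := by
    rcases Nat.eq_zero_or_pos m with hm | hm
    · subst hm
      rw [pow_zero, one_mul]
      calc Real.exp t / 4 ≤ Real.sinh t := sinh_ge_exp ht
        _ ≤ Real.sinh t ^ n := le_self_pow₀ hS1 (by omega)
    · calc Real.exp t / 4 ≤ Real.exp t / 2 := by
            have := (Real.exp_pos t).le; linarith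
        _ ≤ Real.cosh t := cosh_ge_exp t
        _ ≤ Real.cosh t ^ m := le_self_pow₀ hX1 (by omega)
        _ ≤ Real.cosh t ^ m * Real.sinh t ^ n :=
            le_mul_of_one_le_right (by positivity) (one_le_pow₀ hS1)
  have hnum : |(c * t - a) ^ k| ≤ ((|c| + |a|) * t) ^ k := by
    rw [abs_pow]
    refine pow_le_pow_left₀ (abs_nonneg _) ?_ k
    calc |c * t - a| ≤ |c * t| + |a| := abs_sub _ _
      _ = |c| * t + |a| := by rw [abs_mul, abs_of_pos (by linarith : (0:ℝ) < t)]
      _ ≤ |c| * t + |a| * t := by nlinarith [abs_nonneg a]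
      _ = (|c| + |a|) * t := by ring
  rw [Real.norm_eq_abs, abs_div, abs_of_pos hdenpos]
  calc |(c * t - a) ^ k| / (Real.cosh t ^ m * Real.sinh t ^ n)
      ≤ ((|c| + |a|) * t) ^ k / (Real.exp t / 4) :=
        div_le_div₀ (by positivity) hnum (by positivity) hden
    _ = 4 * (|c| + |a|) ^ k * (t ^ k * Real.exp (-t)) := by
        rw [mul_pow, Real.exp_neg]
        field_simp

lemma exists_T0 (hc : c ≠ 0) :
    ∃ T0 : ℝ, 1 ≤ T0 ∧ ∀ t, T0 ≤ t → |c * t - a| ≤ |c| * Real.cosh t / 4 := by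
  have h0 := lemA (c := c) (a := a) 1 1 0 (by norm_num)
  simp only [pow_one, pow_zero, mul_one] at h0
  have h1 : Tendsto (fun t => |(c * t - a) / Real.cosh t|) atTop (𝓝 0) := by
    simpa using h0.abs
  have h2 : ∀ᶠ t in atTop, |(c * t - a) / Real.cosh t| < |c| / 4 :=
    h1.eventually_lt_const (by positivity)
  obtain ⟨T0, hT0⟩ := (h2.and (eventually_ge_atTop (1:ℝ))).exists_forall_of_atTop
  refine ⟨max T0 1, le_max_right _ _, fun t ht => ?_⟩
  obtain ⟨h3, _⟩ := hT0 t (le_trans (le_max_left _ _) ht)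
  have hXpos : (0:ℝ) < Real.cosh t := Real.cosh_pos (x := t)
  rw [abs_div, abs_of_pos hXpos, div_lt_iff₀ hXpos] at h3
  nlinarith

lemma NN_neg (hc : c ≠ 0) {t : ℝ} (ht : 1 ≤ t)
    (hP : |c * t - a| ≤ |c| * Real.cosh t / 4) : NN c a t < 0 := by
  have hXpos : (0:ℝ) < Real.cosh t := Real.cosh_pos (x := t)
  have hS1 : (1:ℝ) ≤ Real.sinh t := sinh_ge_one ht
  have hc2 : (0:ℝ) < c ^ 2 := by positivity
  have e0 : (|c| * Real.cosh t / 4) ^ 2 = c ^ 2 * Real.cosh t ^ 2 / 16 := by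
    rw [div_pow, mul_pow, sq_abs]; norm_num
  have e1 : (c * t - a) ^ 2 ≤ c ^ 2 * Real.cosh t ^ 2 / 16 := by
    have h2 := pow_le_pow_left₀ (abs_nonneg (c * t - a)) hP 2
    rwa [sq_abs, e0] at h2
  have e2 : -(2 * c * Real.cosh t * (c * t - a)) ≤ c ^ 2 * Real.cosh t ^ 2 / 2 := by
    have h3 : |2 * c * Real.cosh t * (c * t - a)| ≤ c ^ 2 * Real.cosh t ^ 2 / 2 := by
      rw [abs_mul, abs_mul, abs_mul, abs_of_pos hXpos]
      calc |2| * |c| * Real.cosh t * |c * t - a|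
          ≤ |2| * |c| * Real.cosh t * (|c| * Real.cosh t / 4) := by
            apply mul_le_mul_of_nonneg_left hP (by positivity)
        _ = c ^ 2 * Real.cosh t ^ 2 / 2 := by
            rw [abs_two]; nlinarith [sq_abs c]
    nlinarith [neg_abs_le (2 * c * Real.cosh t * (c * t - a))]
  have hSpos : (0:ℝ) < Real.sinh t := by linarith
  have t1 : Real.sinh t * (c * t - a) ^ 2
      ≤ Real.sinh t * (c ^ 2 * Real.cosh t ^ 2 / 16) :=
    mul_le_mul_of_nonneg_left e1 hSpos.le
  have hpos : (0:ℝ) < c ^ 2 * Real.cosh t ^ 2 := by positivity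
  unfold NN
  nlinarith [mul_le_mul_of_nonneg_right hS1 hpos.le]


noncomputable def RR (c a t : ℝ) : ℝ :=
  (3 * c ^ 8 * Real.cosh t ^ 9 - 3 * c ^ 8 * Real.cosh t ^ 8 * Real.sinh t ^ 1) + (-3 * c ^ 2) * Real.cosh t ^ 0 * Real.sinh t ^ 1 * (c * t - a) ^ 6 + (2 * c ^ 1) * Real.cosh t ^ 0 * Real.sinh t ^ 1 * (c * t - a) ^ 7 + (18 * c ^ 3) * Real.cosh t ^ 1 * Real.sinh t ^ 0 * (c * t - a) ^ 5 + (-12 * c ^ 2) * Real.cosh t ^ 1 * Real.sinh t ^ 0 * (c * t - a) ^ 6 + (1) * Real.cosh t ^ 1 * Real.sinh t ^ 0 * (c * t - a) ^ 8 + (45 * c ^ 4) * Real.cosh t ^ 2 * Real.sinh t ^ 1 * (c * t - a) ^ 4 + (-30 * c ^ 3) * Real.cosh t ^ 2 * Real.sinh t ^ 1 * (c * t - a) ^ 5 + (3 * c ^ 2) * Real.cosh t ^ 2 * Real.sinh t ^ 1 * (c * t - a) ^ 6 + (-4 * c ^ 1) * Real.cosh t ^ 2 * Real.sinh t ^ 1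 * (c * t - a) ^ 7 + (-60 * c ^ 5) * Real.cosh t ^ 3 * Real.sinh t ^ 0 * (c * t - a) ^ 3 + (40 * c ^ 4) * Real.cosh t ^ 3 * Real.sinh t ^ 0 * (c * t - a) ^ 4 + (-18 * c ^ 3) * Real.cosh t ^ 3 * Real.sinh t ^ 0 * (c * t - a) ^ 5 + (18 * c ^ 2) * Real.cosh t ^ 3 * Real.sinh t ^ 0 * (c * t - a) ^ 6 + (-45 * c ^ 6) * Real.cosh t ^ 4 * Real.sinh t ^ 1 * (c * t - a) ^ 2 + (30 * c ^ 5) * Real.cosh t ^ 4 * Real.sinh t ^ 1 * (c * t - a) ^ 3 + (-9 * c ^ 4) * Real.cosh t ^ 4 * Real.sinh t ^ 1 * (c * t - a) ^ 4 + (18 * c ^ 7) * Real.cosh t ^ 5 * Real.sinh t ^ 0 * (c * t - a) ^ 1 + (-12 * c ^ 6) * Real.cosh t ^ 5 * Real.sinh t ^ 0 * (c * t - a) ^ 2 + (36 * c ^ 5) * Real.cosh t ^ 5 * Real.sinh t ^ 0 * (c * t - a) ^ 3 + (-12 * c ^ 4) * Real.cosh t ^ 5 * Real.sinh t ^ 0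 * (c * t - a) ^ 4 + (3 * c ^ 8) * Real.cosh t ^ 6 * Real.sinh t ^ 1 * (c * t - a) ^ 0 + (-2 * c ^ 7) * Real.cosh t ^ 6 * Real.sinh t ^ 1 * (c * t - a) ^ 1 + (9 * c ^ 6) * Real.cosh t ^ 6 * Real.sinh t ^ 1 * (c * t - a) ^ 2 + (-12 * c ^ 5) * Real.cosh t ^ 6 * Real.sinh t ^ 1 * (c * t - a) ^ 3 + (-18 * c ^ 7) * Real.cosh t ^ 7 * Real.sinh t ^ 0 * (c * t - a) ^ 1 + (22 * c ^ 6) * Real.cosh t ^ 7 * Real.sinh t ^ 0 * (c * t - a) ^ 2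

lemma NN_cube (t : ℝ) : NN c a t ^ 3 = (-1) * Real.sinh t ^ 1 * (c * t - a) ^ 6 + (6) * c ^ 1 * Real.cosh t ^ 1 * (c * t - a) ^ 5 + (15) * c ^ 2 * Real.cosh t ^ 2 * Real.sinh t ^ 1 * (c * t - a) ^ 4 + (1) * Real.cosh t ^ 2 * Real.sinh t ^ 1 * (c * t - a) ^ 6 + (-20) * c ^ 3 * Real.cosh t ^ 3 * (c * t - a) ^ 3 + (-6) * c ^ 1 * Real.cosh t ^ 3 * (c * t - a) ^ 5 + (-15) * c ^ 4 * Real.cosh t ^ 4 * Real.sinh t ^ 1 * (c * t - a) ^ 2 + (-3) * c ^ 2 * Real.cosh t ^ 4 * Real.sinh t ^ 1 * (c * t - a) ^ 4 + (6) * c ^ 5 * Real.cosh t ^ 5 * (c * t - a) ^ 1 + (12) * c ^ 3 * Real.cosh t ^ 5 * (c * t - a) ^ 3 + (1) * c ^ 6 * Real.cosh t ^ 6 * Real.sinh t ^ 1 + (3) * c ^ 4 * Real.cosh t ^ 6 * Real.sinh t ^ 1 * (c * t - a) ^ 2 + (-6) * c ^ 5 * Real.cosh t ^ 7 * (c * t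 - a) ^ 1 + (-1) * c ^ 6 * Real.cosh t ^ 8 * Real.sinh t ^ 1 := by
  unfold NN
  linear_combination ((-1) * Real.sinh t ^ 1 * (c * t - a) ^ 6 + (6) * c ^ 1 * Real.cosh t ^ 1 * (c * t - a) ^ 5 + (3) * c ^ 2 * Real.cosh t ^ 2 * Real.sinh t ^ 1 * (c * t - a) ^ 4 + (-12) * c ^ 3 * Real.cosh t ^ 3 * (c * t - a) ^ 3 + (-3) * c ^ 4 * Real.cosh t ^ 4 * Real.sinh t ^ 1 * (c * t - a) ^ 2 + (6) * c ^ 5 * Real.cosh t ^ 5 * (c * t - a) ^ 1 + (1) * c ^ 6 * Real.cosh t ^ 6 * Real.sinh t ^ 1) * Real.cosh_sq_sub_sinh_sq t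

lemma tendsto_exp_neg : Tendsto (fun t : ℝ => Real.exp (-t)) atTop (𝓝 0) := by
  exact Real.tendsto_exp_atBot.comp tendsto_neg_atTop_atBot

lemma tendsto_exp_neg2 : Tendsto (fun t : ℝ => Real.exp (-2 * t)) atTop (𝓝 0) := by
  have h := tendsto_exp_neg.mul tendsto_exp_neg
  simp only [mul_zero] at h
  refine Tendsto.congr (fun t => ?_) h
  rw [← Real.exp_add]; ring_nf

lemma tendsto_log_one_add {f : ℝ → ℝ} (hf : Tendsto f atTop (𝓝 0)) :
    Tendsto (fun t => Real.log (1 + f t)) atTop (𝓝 0) := by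
  have h1 : Tendsto (fun t => 1 + f t) atTop (𝓝 1) := by
    simpa using tendsto_const_nhds.add hf
  have h2 := (Real.continuousAt_log (by norm_num : (1:ℝ) ≠ 0)).tendsto.comp h1
  simpa [Real.log_one, Function.comp_def] using h2

lemma tendsto_sinh_div_cosh : Tendsto (fun t => Real.sinh t / Real.cosh t) atTop (𝓝 1) := by
  have hsmall : Tendsto (fun t => Real.exp (-t) / Real.cosh t) atTop (𝓝 0) := by
    apply squeeze_zero (fun t => by positivity) (fun t => ?_) tendsto_exp_neg
    rw [div_le_iff₀ (Real.cosh_pos (x := t))]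
    nlinarith [Real.one_le_cosh t, Real.exp_pos (-t)]
  have h1 : Tendsto (fun t => 1 - Real.exp (-t) / Real.cosh t) atTop (𝓝 1) := by
    simpa using tendsto_const_nhds.sub hsmall
  refine Tendsto.congr (fun t => ?_) h1
  have hX := (Real.cosh_pos (x := t)).ne'
  have hXS := Real.cosh_sub_sinh t
  field_simp
  linarith [hXS]

lemma termM (co : ℝ) (i j k : ℕ) (hij : i + j ≤ 7) :
    Tendsto (fun t => co * Real.cosh t ^ i * Real.sinh t ^ j * (c * t - a) ^ k
      / (Real.cosh t ^ 8 * Real.sinh t)) atTop (𝓝 0) := by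
  have hb : Tendsto (fun t => |co| * |(c * t - a) ^ k / (Real.cosh t ^ 1 * Real.sinh t ^ 1)|)
      atTop (𝓝 0) := by
    simpa using ((lemA (c := c) (a := a) k 1 1 (by norm_num)).abs.const_mul |co|)
  apply squeeze_zero_norm' ?_ hb
  filter_upwards [eventually_ge_atTop (1:ℝ)] with t ht
  have hX : (0:ℝ) < Real.cosh t := Real.cosh_pos (x := t)
  have hS : (0:ℝ) < Real.sinh t := Real.sinh_pos_iff.2 (by linarith)
  have hX1 : (1:ℝ) ≤ Real.cosh t := Real.one_le_cosh t
  have hSX : Real.sinh t ≤ Real.cosh t := by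
    nlinarith [Real.cosh_sub_sinh t, Real.exp_pos (-t)]
  have hrhs : |co| * |(c * t - a) ^ k / (Real.cosh t ^ 1 * Real.sinh t ^ 1)|
      = |co| * |c * t - a| ^ k / (Real.cosh t * Real.sinh t) := by
    rw [abs_div, abs_pow, abs_of_pos (by positivity : (0:ℝ) < Real.cosh t ^ 1 * Real.sinh t ^ 1)]
    rw [pow_one, pow_one, mul_div_assoc]
  rw [hrhs, Real.norm_eq_abs, abs_div, abs_of_pos (by positivity : (0:ℝ) < Real.cosh t ^ 8 * Real.sinh t),
    abs_mul, abs_mul, abs_mul, abs_pow, abs_pow, abs_pow, abs_of_pos hX, abs_of_pos hS]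
  rw [div_le_div_iff₀ (by positivity) (by positivity)]
  have key : Real.cosh t ^ i * Real.sinh t ^ j * (Real.cosh t * Real.sinh t)
      ≤ Real.cosh t ^ 8 * Real.sinh t := by
    have k1 : Real.sinh t ^ j ≤ Real.cosh t ^ j := pow_le_pow_left₀ hS.le hSX j
    have k3 : Real.cosh t ^ (i + j + 1) ≤ Real.cosh t ^ 8 :=
      pow_le_pow_right₀ hX1 (by omega)
    calc Real.cosh t ^ i * Real.sinh t ^ j * (Real.cosh t * Real.sinh t)
        ≤ Real.cosh t ^ i * Real.cosh t ^ j * (Real.cosh t * Real.sinh t) := by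
          apply mul_le_mul_of_nonneg_right
            (mul_le_mul_of_nonneg_left k1 (pow_pos hX i).le) (by positivity)
      _ = Real.cosh t ^ (i + j + 1) * Real.sinh t := by
          rw [pow_add, pow_add, pow_one]; ring
      _ ≤ Real.cosh t ^ 8 * Real.sinh t := mul_le_mul_of_nonneg_right k3 hS.le
  nlinarith [mul_le_mul_of_nonneg_left key
    (by positivity : (0:ℝ) ≤ |co| * |c * t - a| ^ k), pow_pos hX i]

lemma tendsto_RR : Tendsto (fun t => RR c a t / (Real.cosh t ^ 8 * Real.sinh t)) atTop (𝓝 0) := by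
  have hsp : Tendsto (fun t => (3 * c ^ 8 * Real.cosh t ^ 9
      - 3 * c ^ 8 * Real.cosh t ^ 8 * Real.sinh t ^ 1) / (Real.cosh t ^ 8 * Real.sinh t))
      atTop (𝓝 0) := by
    have he : Tendsto (fun t => Real.exp (-t) / Real.sinh t) atTop (𝓝 0) := by
      apply squeeze_zero_norm' ?_ tendsto_exp_neg
      filter_upwards [eventually_ge_atTop (1:ℝ)] with t ht
      have hS1 : (1:ℝ) ≤ Real.sinh t := sinh_ge_one ht
      rw [Real.norm_eq_abs, abs_div, abs_of_pos (Real.exp_pos _), abs_of_pos (by linarith)]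
      rw [div_le_iff₀ (by linarith)]
      nlinarith [Real.exp_pos (-t)]
    have hb : Tendsto (fun t => 3 * c ^ 8 * (Real.exp (-t) / Real.sinh t)) atTop (𝓝 0) := by
      simpa using he.const_mul (3 * c ^ 8)
    refine Tendsto.congr' ?_ hb
    filter_upwards [eventually_ge_atTop (1:ℝ)] with t ht
    have hX := (Real.cosh_pos (x := t)).ne'
    have hS := (Real.sinh_pos_iff.2 (by linarith : (0:ℝ) < t)).ne'
    field_simp
    rw [← Real.cosh_sub_sinh]
  have h3 := termM (c := c) (a := a) (-3 * c ^ 2) 0 1 6 (by norm_num)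
  have h4 := termM (c := c) (a := a) (2 * c ^ 1) 0 1 7 (by norm_num)
  have h5 := termM (c := c) (a := a) (18 * c ^ 3) 1 0 5 (by norm_num)
  have h6 := termM (c := c) (a := a) (-12 * c ^ 2) 1 0 6 (by norm_num)
  have h7 := termM (c := c) (a := a) (1) 1 0 8 (by norm_num)
  have h8 := termM (c := c) (a := a) (45 * c ^ 4) 2 1 4 (by norm_num)
  have h9 := termM (c := c) (a := a) (-30 * c ^ 3) 2 1 5 (by norm_num)
  have h10 := termM (c := c) (a := a) (3 * c ^ 2) 2 1 6 (by norm_num)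
  have h11 := termM (c := c) (a := a) (-4 * c ^ 1) 2 1 7 (by norm_num)
  have h12 := termM (c := c) (a := a) (-60 * c ^ 5) 3 0 3 (by norm_num)
  have h13 := termM (c := c) (a := a) (40 * c ^ 4) 3 0 4 (by norm_num)
  have h14 := termM (c := c) (a := a) (-18 * c ^ 3) 3 0 5 (by norm_num)
  have h15 := termM (c := c) (a := a) (18 * c ^ 2) 3 0 6 (by norm_num)
  have h16 := termM (c := c) (a := a) (-45 * c ^ 6) 4 1 2 (by norm_num)
  have h17 := termM (c := c) (a := a) (30 * c ^ 5) 4 1 3 (by norm_num)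
  have h18 := termM (c := c) (a := a) (-9 * c ^ 4) 4 1 4 (by norm_num)
  have h19 := termM (c := c) (a := a) (18 * c ^ 7) 5 0 1 (by norm_num)
  have h20 := termM (c := c) (a := a) (-12 * c ^ 6) 5 0 2 (by norm_num)
  have h21 := termM (c := c) (a := a) (36 * c ^ 5) 5 0 3 (by norm_num)
  have h22 := termM (c := c) (a := a) (-12 * c ^ 4) 5 0 4 (by norm_num)
  have h23 := termM (c := c) (a := a) (3 * c ^ 8) 6 1 0 (by norm_num)
  have h24 := termM (c := c) (a := a) (-2 * c ^ 7) 6 1 1 (by norm_num)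
  have h25 := termM (c := c) (a := a) (9 * c ^ 6) 6 1 2 (by norm_num)
  have h26 := termM (c := c) (a := a) (-12 * c ^ 5) 6 1 3 (by norm_num)
  have h27 := termM (c := c) (a := a) (-18 * c ^ 7) 7 0 1 (by norm_num)
  have h28 := termM (c := c) (a := a) (22 * c ^ 6) 7 0 2 (by norm_num)
  have hchain := ((((((((((((((((((((((((((hsp).add h3).add h4).add h5).add h6).add h7).add h8).add h9).add h10).add h11).add h12).add h13).add h14).add h15).add h16).add h17).add h18).add h19).add h20).add h21).add h22).add h23).add h24).add h25).add h26).add h27).add h28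
  unfold RR
  simp only [add_div]
  convert hchain using 2
  norm_num
lemma log_cosh_eq (t : ℝ) :
    Real.log (Real.cosh t) = t - Real.log 2 + Real.log (1 + Real.exp (-2 * t)) := by
  have h1 : Real.cosh t = Real.exp t * (1 + Real.exp (-2 * t)) / 2 := by
    rw [Real.cosh_eq]
    have h2 : Real.exp t * Real.exp (-2 * t) = Real.exp (-t) := by
      rw [← Real.exp_add]; ring_nf
    rw [mul_add, mul_one, h2]
  rw [h1, Real.log_div (by positivity) (by norm_num),
    Real.log_mul (Real.exp_ne_zero t) (by positivity), Real.log_exp]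
  ring

lemma log_DD_eq (hc : c ≠ 0) (t : ℝ) :
    Real.log (DD c a t) = 2 * Real.log |c| + 2 * Real.log (Real.cosh t)
      + Real.log (1 + (c * t - a) ^ 2 / (c ^ 2 * Real.cosh t ^ 2)) := by
  have hX := Real.cosh_pos (x := t)
  have h1 : DD c a t = (|c| * Real.cosh t) ^ 2 * (1 + (c * t - a) ^ 2 / (c ^ 2 * Real.cosh t ^ 2)) := by
    rw [mul_pow, sq_abs]; unfold DD; field_simp
  have h2 : (0:ℝ) < 1 + (c * t - a) ^ 2 / (c ^ 2 * Real.cosh t ^ 2) := by positivity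
  rw [h1, Real.log_mul (by positivity) h2.ne', Real.log_pow,
    Real.log_mul (abs_ne_zero.mpr hc) hX.ne']
  push_cast
  ring

lemma log_hh_eq (hc : c ≠ 0) (t : ℝ) :
    Real.log (hh c a t) = -Real.log |c| - t + Real.log 2 - Real.log (1 + Real.exp (-2 * t))
      - Real.log (1 + (c * t - a) ^ 2 / (c ^ 2 * Real.cosh t ^ 2)) := by
  have hX := Real.cosh_pos (x := t)
  rw [hh, Real.log_div (by positivity) (DD_pos hc t).ne',
    Real.log_mul (abs_ne_zero.mpr hc) hX.ne', log_DD_eq hc, log_cosh_eq]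
  ring

lemma QP3 (hc : c ≠ 0) :
    Tendsto (fun t => QQ c a t - 2 * (c * t - a) + 3 * c) atTop (𝓝 0) := by
  obtain ⟨T0, hT01, hT0⟩ := exists_T0 (c := c) (a := a) hc
  have h220 : Tendsto (fun t => (c * t - a) ^ 2 / Real.cosh t ^ 2) atTop (𝓝 0) := by
    have := lemA (c := c) (a := a) 2 2 0 (by norm_num); simpa using this
  have h111 : Tendsto (fun t => (c * t - a) / (Real.cosh t * Real.sinh t)) atTop (𝓝 0) := by
    have := lemA (c := c) (a := a) 1 1 1 (by norm_num); simpa using this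
  have hq := tendsto_sinh_div_cosh
  have hin : Tendsto (fun t => (c * t - a) ^ 2 / Real.cosh t ^ 2 - c ^ 2
      - 2 * c * ((c * t - a) / (Real.cosh t * Real.sinh t))) atTop
      (𝓝 ((0 - c ^ 2) - 2 * c * 0)) :=
    (h220.sub_const (c ^ 2)).sub (h111.const_mul (2 * c))
  have hFden0 : Tendsto (fun t => c * ((c * t - a) ^ 2 / Real.cosh t ^ 2 - c ^ 2
      - 2 * c * ((c * t - a) / (Real.cosh t * Real.sinh t))) ^ 3
      * (Real.sinh t / Real.cosh t) ^ 2) atTop (𝓝 (-c ^ 7)) := by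
    have H := ((hin.pow 3).const_mul c).mul (hq.pow 2)
    convert H using 2
    ring
  have hFden : Tendsto (fun t => c * NN c a t ^ 3 / (Real.cosh t ^ 8 * Real.sinh t))
      atTop (𝓝 (-c ^ 7)) := by
    refine Tendsto.congr' ?_ hFden0
    filter_upwards [eventually_ge_atTop (1:ℝ)] with t ht
    have hX := (Real.cosh_pos (x := t)).ne'
    have hS := (Real.sinh_pos_iff.2 (by linarith : (0:ℝ) < t)).ne'
    unfold NN
    field_simp
  have hne : (-c ^ 7 : ℝ) ≠ 0 := neg_ne_zero.mpr (pow_ne_zero 7 hc)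
  have hdiv : Tendsto (fun t => (RR c a t / (Real.cosh t ^ 8 * Real.sinh t))
      / (c * NN c a t ^ 3 / (Real.cosh t ^ 8 * Real.sinh t))) atTop (𝓝 0) := by
    have := (tendsto_RR (c := c) (a := a)).div hFden hne
    rw [zero_div] at this
    exact this
  refine Tendsto.congr' ?_ hdiv
  filter_upwards [eventually_ge_atTop (max T0 1)] with t ht
  have ht1 : (1:ℝ) ≤ t := le_trans (le_max_right _ _) ht
  have htT0 : T0 ≤ t := le_trans (le_max_left _ _) ht
  have hN : NN c a t < 0 := NN_neg hc ht1 (hT0 t htT0)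
  have hX := Real.cosh_pos (x := t)
  have hS : (0:ℝ) < Real.sinh t := Real.sinh_pos_iff.2 (by linarith)
  have hdne : Real.cosh t ^ 8 * Real.sinh t ≠ 0 := by positivity
  have hB := NN_cube (c := c) (a := a) t
  have hB3 : NN c a t ^ 3 ≠ 0 := pow_ne_zero 3 hN.ne
  rw [div_div_eq_mul_div, div_mul_cancel₀ _ hdne]
  unfold QQ
  rw [hB] at hB3 ⊢
  rw [div_eq_iff (mul_ne_zero hc hB3), add_mul, sub_mul,
    div_mul_cancel₀ _ (mul_ne_zero hc hB3)]
  unfold RR DD GG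
  ring

lemma L1tendsto (hc : c ≠ 0) :
    Tendsto (fun t => (VV c a t - (-c * (hh c a t) ^ 2 * Real.log (hh c a t)
      + (c * Real.log 2 - c * Real.log |c| - a) * (hh c a t) ^ 2)) / (hh c a t) ^ 2)
      atTop (𝓝 0) := by
  have h320 : Tendsto (fun t => (c * t - a) ^ 3 / (c ^ 2 * Real.cosh t ^ 2)) atTop (𝓝 0) := by
    have h0 := lemA (c := c) (a := a) 3 2 0 (by norm_num)
    have h1 := h0.const_mul (1 / c ^ 2)
    simp only [mul_zero] at h1
    refine Tendsto.congr (fun t => ?_) h1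
    have hX := (Real.cosh_pos (x := t)).ne'
    rw [pow_zero, mul_one]
    field_simp
  have hp : Tendsto (fun t => (c * t - a) ^ 2 / (c ^ 2 * Real.cosh t ^ 2)) atTop (𝓝 0) := by
    have h0 := lemA (c := c) (a := a) 2 2 0 (by norm_num)
    have h1 := h0.const_mul (1 / c ^ 2)
    simp only [mul_zero] at h1
    refine Tendsto.congr (fun t => ?_) h1
    have hX := (Real.cosh_pos (x := t)).ne'
    rw [pow_zero, mul_one]
    field_simp
  have hγ := tendsto_log_one_add tendsto_exp_neg2
  have hlp := tendsto_log_one_add hp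
  have main : Tendsto (fun t => (c * t - a) ^ 3 / (c ^ 2 * Real.cosh t ^ 2)
      - c * Real.log (1 + Real.exp (-2 * t))
      - c * Real.log (1 + (c * t - a) ^ 2 / (c ^ 2 * Real.cosh t ^ 2))) atTop
      (𝓝 (0 - c * 0 - c * 0)) :=
    (h320.sub (hγ.const_mul c)).sub (hlp.const_mul c)
  rw [show (0:ℝ) - c * 0 - c * 0 = 0 by ring] at main
  refine Tendsto.congr (fun t => ?_) main
  have hhp := hh_pos (c := c) (a := a) hc t
  have hhne := hhp.ne'
  have hX := Real.cosh_pos (x := t)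
  have hD := DD_pos (c := c) (a := a) hc t
  have hsq : hh c a t ^ 2 = c ^ 2 * Real.cosh t ^ 2 / DD c a t ^ 2 := by
    rw [hh, div_pow, mul_pow, sq_abs]
  have hVdiv : VV c a t / (hh c a t) ^ 2
      = (c * t - a) + (c * t - a) ^ 3 / (c ^ 2 * Real.cosh t ^ 2) := by
    rw [VV, hsq]
    unfold DD
    field_simp
  have hstep : (VV c a t - (-c * (hh c a t) ^ 2 * Real.log (hh c a t)
      + (c * Real.log 2 - c * Real.log |c| - a) * (hh c a t) ^ 2)) / (hh c a t) ^ 2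
      = VV c a t / (hh c a t) ^ 2 + c * Real.log (hh c a t)
        - (c * Real.log 2 - c * Real.log |c| - a) := by
    field_simp
    ring
  rw [eq_comm, hstep, hVdiv, log_hh_eq hc]
  ring

lemma L2tendsto (hc : c ≠ 0) :
    Tendsto (fun t => QQ c a t + 2 * c * Real.log (hh c a t)) atTop
      (𝓝 (-2 * a - 3 * c - 2 * c * Real.log |c| + 2 * c * Real.log 2)) := by
  have hp : Tendsto (fun t => (c * t - a) ^ 2 / (c ^ 2 * Real.cosh t ^ 2)) atTop (𝓝 0) := by
    have h0 := lemA (c := c) (a := a) 2 2 0 (by norm_num)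
    have h1 := h0.const_mul (1 / c ^ 2)
    simp only [mul_zero] at h1
    refine Tendsto.congr (fun t => ?_) h1
    have hX := (Real.cosh_pos (x := t)).ne'
    rw [pow_zero, mul_one]
    field_simp
  have hγ := tendsto_log_one_add tendsto_exp_neg2
  have hlp := tendsto_log_one_add hp
  have hQ := QP3 (c := c) (a := a) hc
  have main := ((hQ.add_const (-2 * a - 3 * c - 2 * c * Real.log |c|
    + 2 * c * Real.log 2)).sub (hγ.const_mul (2 * c))).sub (hlp.const_mul (2 * c))
  simp only [mul_zero, sub_zero, zero_add] at main
  refine Tendsto.congr (fun t => ?_) main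
  rw [log_hh_eq hc]
  ring
theorem aux (hc : c ≠ 0) :
    ∃ tStar : ℝ, ∃ U : ℝ → ℝ,
      StrictAntiOn (hh c a) (Set.Ici tStar) ∧
      (∀ t ∈ Set.Ioi tStar, U (hh c a t) = VV c a t) ∧
      Tendsto (fun r => (U r - (-c * r ^ 2 * Real.log r
        + (c * Real.log 2 - c * Real.log |c| - a) * r ^ 2)) / r ^ 2) (𝓝[>] 0) (𝓝 0) ∧
      Tendsto (fun r => deriv (deriv U) r + 2 * c * Real.log r) (𝓝[>] 0)
        (𝓝 (-2 * a - 3 * c - 2 * c * Real.log |c| + 2 * c * Real.log 2)) := by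
  obtain ⟨T0, hT01, hT0⟩ := exists_T0 (c := c) (a := a) hc
  have hNneg : ∀ t, T0 ≤ t → NN c a t < 0 :=
    fun t ht => NN_neg hc (le_trans hT01 ht) (hT0 t ht)
  have hcont : ContinuousOn (hh c a) (Ici T0) :=
    fun t _ => ((hasDerivAt_hh hc t).continuousAt).continuousWithinAt
  have hanti : StrictAntiOn (hh c a) (Ici T0) := by
    apply strictAntiOn_of_deriv_neg (convex_Ici T0) hcont
    intro t ht
    rw [interior_Ici] at ht
    rw [(hasDerivAt_hh hc t).deriv]
    exact div_neg_of_neg_of_pos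
      (mul_neg_of_pos_of_neg (abs_pos.mpr hc) (hNneg t (le_of_lt ht)))
      (pow_pos (DD_pos hc t) 2)
  -- h tends to 0 at infinity
  have htends0 : Tendsto (hh c a) atTop (𝓝 0) := by
    have hb : Tendsto (fun t => (|c| * Real.cosh t)⁻¹) atTop (𝓝 0) := by
      apply Tendsto.inv_tendsto_atTop
      apply Tendsto.const_mul_atTop (abs_pos.mpr hc)
      apply tendsto_atTop_mono cosh_ge_exp
      exact (Real.tendsto_exp_atTop).atTop_div_const (by norm_num)
    apply squeeze_zero (fun t => (hh_pos hc t).le) ?_ hb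
    intro t
    have hXpos : (0:ℝ) < Real.cosh t := Real.cosh_pos (x := t)
    have hD := DD_pos (a := a) hc t
    rw [hh, div_le_iff₀ hD, inv_mul_eq_div, le_div_iff₀
      (by positivity : (0:ℝ) < |c| * Real.cosh t)]
    have h2 : |c| * Real.cosh t * (|c| * Real.cosh t) = c ^ 2 * Real.cosh t ^ 2 := by
      rw [show |c| * Real.cosh t * (|c| * Real.cosh t) = |c| ^ 2 * Real.cosh t ^ 2 from by
        ring, sq_abs]
    rw [h2]
    unfold DD; nlinarith [sq_nonneg (c * t - a)]
  -- surjectivity onto (0, hh T0)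
  have hsurj : ∀ r ∈ Ioo 0 (hh c a T0), ∃ t ∈ Ioi T0, hh c a t = r := by
    intro r hr
    have hev : ∀ᶠ t in atTop, hh c a t < r := htends0.eventually_lt_const hr.1
    obtain ⟨t1, ht1⟩ := (hev.and (eventually_gt_atTop T0)).exists
    have hsub := intermediate_value_Ioo' (le_of_lt ht1.2)
      (hcont.mono (Icc_subset_Ici_self))
    have hrmem : r ∈ Ioo (hh c a t1) (hh c a T0) := ⟨ht1.1, hr.2⟩
    obtain ⟨t, htmem, hteq⟩ := hsub hrmem
    exact ⟨t, htmem.1, hteq⟩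
  classical
  set T : ℝ → ℝ := fun r => Function.invFunOn (hh c a) (Ioi T0) r with hTdef
  set U : ℝ → ℝ := fun r => if r ∈ Ioo 0 (hh c a T0) then VV c a (T r) else 0 with hUdef
  have hTmem : ∀ r ∈ Ioo 0 (hh c a T0), T r ∈ Ioi T0 := by
    intro r hr; obtain ⟨t, ht, hteq⟩ := hsurj r hr
    exact Function.invFunOn_mem ⟨t, ht, hteq⟩
  have hTeq : ∀ r ∈ Ioo 0 (hh c a T0), hh c a (T r) = r := by
    intro r hr; obtain ⟨t, ht, hteq⟩ := hsurj r hr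
    exact Function.invFunOn_eq ⟨t, ht, hteq⟩
  have hlt : ∀ r ∈ Ioo 0 (hh c a T0), ∀ s, T0 < s → hh c a s < r → T r < s := by
    intro r hr s hs hless
    by_contra hcon
    push_neg at hcon
    rcases eq_or_lt_of_le hcon with he | hl
    · rw [he, hTeq r hr] at hless; exact absurd hless (lt_irrefl r)
    · have := hanti (mem_Ici.mpr hs.le) (mem_Ici.mpr (le_of_lt (hTmem r hr))) hl
      rw [hTeq r hr] at this; linarith
  have hgt : ∀ r ∈ Ioo 0 (hh c a T0), ∀ s, T0 < s → r < hh c a s → s < T r := by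
    intro r hr s hs hmore
    by_contra hcon
    push_neg at hcon
    rcases eq_or_lt_of_le hcon with he | hl
    · rw [← he, hTeq r hr] at hmore; exact lt_irrefl r hmore
    · have := hanti (mem_Ici.mpr (le_of_lt (hTmem r hr))) (mem_Ici.mpr hs.le) hl
      rw [hTeq r hr] at this; linarith
  -- continuity of T
  have hTcont : ∀ r ∈ Ioo 0 (hh c a T0), ContinuousAt T r := by
    intro r hr
    rw [Metric.continuousAt_iff]
    intro ε hε
    have htmem := hTmem r hr
    have hteq := hTeq r hr
    set t := T r with htdef
    have htT0 : T0 < t := htmem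
    set ε' : ℝ := min ε ((t - T0) / 2) with hε'def
    have hε' : 0 < ε' := lt_min hε (by linarith)
    have h1 : T0 < t - ε' := by
      have : ε' ≤ (t - T0) / 2 := min_le_right _ _
      linarith
    have ha1 : hh c a t < hh c a (t - ε') :=
      hanti (mem_Ici.mpr h1.le) (mem_Ici.mpr htT0.le) (by linarith)
    have ha2 : hh c a (t + ε') < hh c a t :=
      hanti (mem_Ici.mpr htT0.le) (mem_Ici.mpr (by linarith)) (by linarith)
    have ha3 : hh c a (t - ε') < hh c a T0 :=
      hanti (mem_Ici.mpr le_rfl) (mem_Ici.mpr h1.le) h1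
    refine ⟨min (r - hh c a (t + ε')) (hh c a (t - ε') - r), by
      rw [hteq] at ha1 ha2; exact lt_min (by linarith) (by linarith), ?_⟩
    intro r' hdist
    rw [Real.dist_eq] at hdist
    have hd1 : |r' - r| < r - hh c a (t + ε') := lt_of_lt_of_le hdist (min_le_left _ _)
    have hd2 : |r' - r| < hh c a (t - ε') - r := lt_of_lt_of_le hdist (min_le_right _ _)
    rw [abs_sub_lt_iff] at hd1 hd2
    have hr'1 : hh c a (t + ε') < r' := by linarith
    have hr'2 : r' < hh c a (t - ε') := by linarith
    have hr'mem : r' ∈ Ioo 0 (hh c a T0) :=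
      ⟨lt_trans (hh_pos hc _) hr'1, lt_trans hr'2 ha3⟩
    have hup : T r' < t + ε' := hlt r' hr'mem (t + ε') (by linarith) hr'1
    have hdown : t - ε' < T r' := hgt r' hr'mem (t - ε') h1 hr'2
    rw [Real.dist_eq, abs_sub_lt_iff]
    constructor
    · have : ε' ≤ ε := min_le_left _ _; linarith
    · have : ε' ≤ ε := min_le_left _ _; linarith
  -- T tends to atTop
  have hTtop : Tendsto T (𝓝[>] (0:ℝ)) atTop := by
    rw [tendsto_atTop]
    intro M
    set M' : ℝ := max M (T0 + 1) with hM'def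
    have hM' : T0 < M' := lt_of_lt_of_le (by linarith) (le_max_right _ _)
    have hmin : 0 < min (hh c a M') (hh c a T0) :=
      lt_min (hh_pos hc _) (hh_pos hc _)
    filter_upwards [Ioo_mem_nhdsGT hmin] with r hr
    have hrmem : r ∈ Ioo 0 (hh c a T0) := ⟨hr.1, lt_of_lt_of_le hr.2 (min_le_right _ _)⟩
    have : M' < T r := hgt r hrmem M' hM' (lt_of_lt_of_le hr.2 (min_le_left _ _))
    exact le_trans (le_max_left _ _) this.le
  -- derivative bookkeeping
  have hval : ∀ r ∈ Ioo 0 (hh c a T0),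
      HasDerivAt U (WW c a (T r)) r ∧ deriv (deriv U) r = QQ c a (T r) := by
    intro r hr
    have htmem := hTmem r hr
    have hteq := hTeq r hr
    set t := T r with htdef
    have hN : NN c a t ≠ 0 := (hNneg t (le_of_lt htmem)).ne
    have hD : DD c a t ≠ 0 := (DD_pos hc t).ne'
    have hK : |c| ≠ 0 := abs_ne_zero.mpr hc
    have hne : |c| * NN c a t / DD c a t ^ 2 ≠ 0 := by
      apply div_ne_zero (mul_ne_zero hK hN) (pow_ne_zero _ hD)
    have hevIoo : ∀ᶠ y in 𝓝 r, y ∈ Ioo 0 (hh c a T0) := isOpen_Ioo.eventually_mem hr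
    have hfg : ∀ᶠ y in 𝓝 r, hh c a (T y) = y := hevIoo.mono (fun y hy => hTeq y hy)
    have hT : HasDerivAt T (|c| * NN c a t / DD c a t ^ 2)⁻¹ r :=
      HasDerivAt.of_local_left_inverse (hTcont r hr) (hasDerivAt_hh hc t) hne hfg
    have hUV : ∀ᶠ y in 𝓝 r, U y = VV c a (T y) :=
      hevIoo.mono (fun y hy => by rw [hUdef]; simp only [if_pos hy])
    have hVT : HasDerivAt (fun y => VV c a (T y))
        (NV c a t / DD c a t ^ 2 * (|c| * NN c a t / DD c a t ^ 2)⁻¹) r :=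
      HasDerivAt.comp (h₂ := VV c a) r (hasDerivAt_VV hc t) hT
    have hU : HasDerivAt U (WW c a t) r := by
      refine HasDerivAt.congr_of_eventuallyEq ?_ hUV
      refine hVT.congr_deriv ?_
      rw [WW]
      field_simp
    refine ⟨hU, ?_⟩
    -- second derivative
    have hderivU : ∀ᶠ y in 𝓝 r, deriv U y = WW c a (T y) := by
      filter_upwards [hevIoo] with y hy
      have htmemy := hTmem y hy
      have hteqy := hTeq y hy
      have hNy : NN c a (T y) ≠ 0 := (hNneg (T y) (le_of_lt htmemy)).ne
      have hDy : DD c a (T y) ≠ 0 := (DD_pos hc (T y)).ne'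
      have hney : |c| * NN c a (T y) / DD c a (T y) ^ 2 ≠ 0 :=
        div_ne_zero (mul_ne_zero hK hNy) (pow_ne_zero _ hDy)
      have hevIooy : ∀ᶠ z in 𝓝 y, z ∈ Ioo 0 (hh c a T0) := isOpen_Ioo.eventually_mem hy
      have hfgy : ∀ᶠ z in 𝓝 y, hh c a (T z) = z := hevIooy.mono (fun z hz => hTeq z hz)
      have hTy : HasDerivAt T (|c| * NN c a (T y) / DD c a (T y) ^ 2)⁻¹ y :=
        HasDerivAt.of_local_left_inverse (hTcont y hy) (hasDerivAt_hh hc (T y)) hney hfgy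
      have hUVy : ∀ᶠ z in 𝓝 y, U z = VV c a (T z) :=
        hevIooy.mono (fun z hz => by rw [hUdef]; simp only [if_pos hz])
      have hUy : HasDerivAt U (WW c a (T y)) y := by
        refine HasDerivAt.congr_of_eventuallyEq ?_ hUVy
        refine ((hasDerivAt_VV hc (T y)).comp y hTy).congr_deriv ?_
        rw [WW]; field_simp
      exact hUy.deriv
    have hWT : HasDerivAt (fun y => WW c a (T y))
        (c * Real.cosh t * DD c a t * GG c a t / (|c| * NN c a t ^ 2)
          * (|c| * NN c a t / DD c a t ^ 2)⁻¹) r :=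
      HasDerivAt.comp (h₂ := WW c a) r (hasDerivAt_WW hc hN) hT
    have hdd : HasDerivAt (deriv U) (QQ c a t) r := by
      refine HasDerivAt.congr_of_eventuallyEq (hWT.congr_deriv ?_) hderivU
      rw [QQ, inv_div, div_mul_div_comm, div_eq_div_iff
        (by exact mul_ne_zero (mul_ne_zero hK (pow_ne_zero _ hN)) (mul_ne_zero hK hN))
        (mul_ne_zero hc (pow_ne_zero _ hN))]
      linear_combination (-(Real.cosh t * DD c a t ^ 3 * GG c a t * NN c a t ^ 3)) * sq_abs c
    exact hdd.deriv
  refine ⟨T0, U, hanti, ?_, ?_, ?_⟩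
  · -- condition 2
    intro t ht
    have hmem : hh c a t ∈ Ioo 0 (hh c a T0) :=
      ⟨hh_pos hc t, hanti (mem_Ici.mpr le_rfl) (mem_Ici.mpr (le_of_lt ht)) ht⟩
    have hTht : T (hh c a t) = t := by
      apply (hanti.injOn.mono (Ioi_subset_Ici le_rfl)) (hTmem _ hmem) ht
      exact hTeq _ hmem
    rw [hUdef]
    simp only [if_pos hmem, hTht]
  · -- condition 3
    have hIoo : Ioo (0:ℝ) (hh c a T0) ∈ 𝓝[>] (0:ℝ) :=
      Ioo_mem_nhdsGT (hh_pos hc T0)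
    have heq : ∀ᶠ r in 𝓝[>] (0:ℝ),
        ((fun t => (VV c a t - (-c * (hh c a t) ^ 2 * Real.log (hh c a t)
          + (c * Real.log 2 - c * Real.log |c| - a) * (hh c a t) ^ 2)) / (hh c a t) ^ 2)
            ∘ T) r
        = (U r - (-c * r ^ 2 * Real.log r
            + (c * Real.log 2 - c * Real.log |c| - a) * r ^ 2)) / r ^ 2 := by
      filter_upwards [hIoo] with r hr
      have h1 : U r = VV c a (T r) := by rw [hUdef]; simp only [if_pos hr]
      have h2 : hh c a (T r) = r := hTeq r hr
      simp only [Function.comp_apply, h1, h2]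
    exact Tendsto.congr' heq ((L1tendsto hc).comp hTtop)
  · -- condition 4
    have hIoo : Ioo (0:ℝ) (hh c a T0) ∈ 𝓝[>] (0:ℝ) :=
      Ioo_mem_nhdsGT (hh_pos hc T0)
    have heq : ∀ᶠ r in 𝓝[>] (0:ℝ),
        ((fun t => QQ c a t + 2 * c * Real.log (hh c a t)) ∘ T) r
          = deriv (deriv U) r + 2 * c * Real.log r := by
      filter_upwards [hIoo] with r hr
      have h1 : deriv (deriv U) r = QQ c a (T r) := (hval r hr).2
      have h2 : hh c a (T r) = r := hTeq r hr
      simp only [Function.comp_apply, h1, h2]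
    exact Tendsto.congr' heq ((L2tendsto hc).comp hTtop)
end Stmt19

/-- Inverted catenoid. Given `λ ≠ 0` and `b`, set `c = -λ/4` and
`a = (λ/4)log(|λ|/8) + 3λ/8 - b/2`. The outermost graphical piece `Σ_{c,a}` of the
image of the catenoid `ℱ_c(t,θ) = (|c|cosh t cos θ, |c|cosh t sin θ, ct)` under the
inversion `I_a(x,y,z) = (x,y,z-a)/|(x,y,z-a)|²` — i.e. the piece swept out for `t`
beyond the last critical point `t*` of the radius function
`h(t) = |c|cosh t / (c²cosh²t + (ct-a)²)`, on which `h` is strictly decreasing — is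
the graph of a function `U(r)` satisfying
`U(r) = -c r² log r + (c log 2 - c log|c| - a) r² + o(r²)` as `r → 0⁺`; in particular
`lim_{r→0⁺}(U''(r) - (λ/2)log r) = b`. -/
theorem stmt_19 (lam b : ℝ) (hlam : lam ≠ 0) (c a : ℝ)
    (hc : c = -lam / 4)
    (ha : a = lam / 4 * Real.log (|lam| / 8) + 3 * lam / 8 - b / 2) :
    ∃ tStar : ℝ, ∃ U : ℝ → ℝ,
      StrictAntiOn (fun t => |c| * Real.cosh t /
        (c ^ 2 * (Real.cosh t) ^ 2 + (c * t - a) ^ 2)) (Set.Ici tStar) ∧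
      (∀ t ∈ Set.Ioi tStar,
        U (|c| * Real.cosh t / (c ^ 2 * (Real.cosh t) ^ 2 + (c * t - a) ^ 2))
          = (c * t - a) / (c ^ 2 * (Real.cosh t) ^ 2 + (c * t - a) ^ 2)) ∧
      Tendsto (fun r =>
          (U r - (-c * r ^ 2 * Real.log r
            + (c * Real.log 2 - c * Real.log |c| - a) * r ^ 2)) / r ^ 2)
        (𝓝[>] 0) (𝓝 0) ∧
      Tendsto (fun r => deriv (deriv U) r - lam / 2 * Real.log r) (𝓝[>] 0) (𝓝 b) := by
  have hc0 : c ≠ 0 := by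
    rw [hc]; exact div_ne_zero (neg_ne_zero.mpr hlam) (by norm_num)
  obtain ⟨tS, U, h1, h2, h3, h4⟩ := Stmt19.aux (c := c) (a := a) hc0
  refine ⟨tS, U, h1, h2, h3, ?_⟩
  have habs : |c| = |lam| / 4 := by
    rw [hc, abs_div, abs_neg]; norm_num
  have hval : -2 * a - 3 * c - 2 * c * Real.log |c| + 2 * c * Real.log 2 = b := by
    rw [habs, hc, ha]
    have h8 : Real.log (|lam| / 8) = Real.log |lam| - Real.log 8 :=
      Real.log_div (abs_ne_zero.mpr hlam) (by norm_num)
    have h4' : Real.log (|lam| / 4) = Real.log |lam| - Real.log 4 :=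
      Real.log_div (abs_ne_zero.mpr hlam) (by norm_num)
    have h84 : Real.log 8 = Real.log 4 + Real.log 2 := by
      rw [show (8:ℝ) = 4 * 2 by norm_num, Real.log_mul (by norm_num) (by norm_num)]
    rw [h8, h4', h84]
    ring
  have hfun : (fun r => deriv (deriv U) r - lam / 2 * Real.log r)
      = fun r => deriv (deriv U) r + 2 * c * Real.log r := by
    funext r; rw [hc]; ring
  rw [hfun, ← hval]
  exact h4
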